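/- Optimal collaterals in DAGs: consider the collateral minimization problem P_G with investment graph G = (V,E). If G is acyclic, then a solution to P_G is obtained by solving, for each star sub-graph H_i in the star decomposition ℋ(G), the single-enterprise collateral minimization problem P_{H_i} induced on H_i separately, and combining these collaterals; the combined collateral matrix is viable for P_G (with iterated elimination processing enterprises in reverse topological order, and within each enterprise in the order of its star solution). Consequently the optimal total collateral satisfies C_G = Σ_{H_i ∈ ℋ(G)} C_{H_i}, and the Network Excess Collaterals satisfy NEC(P_G) = 1. -/

import Mathlib

open scoped BigOperators Classical

/-- A network investment game on `n` firms.  `x k i` is the amount that firm `i`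
can invest in the enterprise of firm `k` (`x k i = 0` means that there is no
edge `(k,i)`), `Z k` is the operational cost of the enterprise of `k` and
`α k` is its interest rate.  As in the paper, `Z k = 0` (w.l.o.g.) for
non-enterprise vertices and `α k > 0` for enterprise vertices. -/
structure InvestmentNetwork (n : ℕ) where
  x : Fin n → Fin n → ℝ
  Z : Fin n → ℝ
  α : Fin n → ℝ
  x_nonneg : ∀ k i, 0 ≤ x k i
  Z_nonneg : ∀ k, 0 ≤ Z k
  α_pos : ∀ k, (∃ i, 0 < x k i) → 0 < α k
  Z_spike : ∀ k, (∀ i, x k i = 0) → Z k = 0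

namespace InvestmentNetwork

variable {n : ℕ}

/-- `k` is an enterprise vertex: it has at least one potential investor. -/
def IsEnterprise (N : InvestmentNetwork n) (k : Fin n) : Prop :=
  ∃ i, 0 < N.x k i

/-- The set of edges `(k,i)` of the investment graph: `i` has an investment
opportunity in the enterprise of `k`. -/
noncomputable def edges (N : InvestmentNetwork n) : Finset (Fin n × Fin n) :=
  Finset.univ.filter (fun e => 0 < N.x e.1 e.2)

/-- A strategy profile is identified with its set of cooperate edges. -/
def IsProfile (N : InvestmentNetwork n) (C : Finset (Fin n × Fin n)) : Prop :=
  C ⊆ N.edges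

/-- The total capital raised by enterprise `k` when `I` is a set of invest edges. -/
noncomputable def raised (N : InvestmentNetwork n) (I : Finset (Fin n × Fin n)) (k : Fin n) : ℝ :=
  ∑ i : Fin n, if (k, i) ∈ I then N.x k i else 0

/-- `I` is a consistent set of invest edges within the cooperate edges `C`: the
investor of every edge of `I` is not in default when the invest edges are `I`. -/
def Consistent (N : InvestmentNetwork n) (C I : Finset (Fin n × Fin n)) : Prop :=
  I ⊆ C ∧ ∀ e ∈ I, N.Z e.2 ≤ N.raised I e.2

/-- The set of invest edges determined from the cooperate edges `C` by the
default-determination process (the greatest consistent subset of `C`,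
i.e. the result of iteratively deleting the investments of defaulting firms). -/
noncomputable def investSet (N : InvestmentNetwork n) (C : Finset (Fin n × Fin n)) :
    Finset (Fin n × Fin n) :=
  C.filter (fun e => ∃ I, N.Consistent C I ∧ e ∈ I)

/-- Firm `k` is in default under the cooperate edges `C`. -/
def Defaults (N : InvestmentNetwork n) (C : Finset (Fin n × Fin n)) (k : Fin n) : Prop :=
  N.raised (N.investSet C) k < N.Z k

/-- The enterprise return `R_{ki}` to investor `i` in enterprise `k` when the
set of invest edges is `I`. -/
noncomputable def ret (N : InvestmentNetwork n) (I : Finset (Fin n × Fin n)) (k i : Fin n) : ℝ :=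
  max 0 ((1 + N.α k) * (N.raised I k - N.Z k) * (N.x k i / N.raised I k))

/-- The utility of firm `i` from the edge `(k,i)` under cooperate edges `C` and
collateral matrix `c`: `x k i` if `i` defects, `0` if `i` cooperates but is in
default, and otherwise the return adjusted by the collateral. -/
noncomputable def edgeUtility (N : InvestmentNetwork n) (c : Fin n → Fin n → ℝ)
    (C : Finset (Fin n × Fin n)) (k i : Fin n) : ℝ :=
  if (k, i) ∉ C then N.x k i
  else if (k, i) ∉ N.investSet C then 0
  else if N.ret (N.investSet C) k i ≤ N.x k i - c k i then c k i + N.ret (N.investSet C) k i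
  else if N.ret (N.investSet C) k i ≤ N.x k i then N.x k i
  else N.ret (N.investSet C) k i

/-- Total utility of firm `i`: the sum of her utilities over all her
investment opportunities. -/
noncomputable def utility (N : InvestmentNetwork n) (c : Fin n → Fin n → ℝ)
    (C : Finset (Fin n × Fin n)) (i : Fin n) : ℝ :=
  ∑ k : Fin n, if (k, i) ∈ N.edges then N.edgeUtility c C k i else 0

/-- The number of investment opportunities in which `i` cooperates. -/
noncomputable def coopCount (C : Finset (Fin n × Fin n)) (i : Fin n) : ℕ :=
  (C.filter (fun e => e.2 = i)).card

/-- `c` is a collateral matrix: nonnegative and supported on the edges. -/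
def IsCollateral (N : InvestmentNetwork n) (c : Fin n → Fin n → ℝ) : Prop :=
  ∀ k i, 0 ≤ c k i ∧ (N.x k i = 0 → c k i = 0)

/-- `C'` is obtained from `C` by changing only decisions of player `i`. -/
def Deviation (C C' : Finset (Fin n × Fin n)) (i : Fin n) : Prop :=
  ∀ e : Fin n × Fin n, e.2 ≠ i → (e ∈ C ↔ e ∈ C')

/-- Nash equilibrium of the game induced by the collateral matrix `c`, with
ties broken towards investing: this is formalized by comparing utilities
lexicographically, an infinitesimal bonus being given for each cooperation. -/
def NashEq (N : InvestmentNetwork n) (c : Fin n → Fin n → ℝ)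
    (C : Finset (Fin n × Fin n)) : Prop :=
  N.IsProfile C ∧
    ∀ (i : Fin n) (C' : Finset (Fin n × Fin n)), N.IsProfile C' → Deviation C C' i →
      N.utility c C' i < N.utility c C i ∨
        (N.utility c C' i = N.utility c C i ∧ coopCount C' i ≤ coopCount C i)

/-- A viable collateral matrix: all-cooperate is the unique Nash equilibrium of
the induced game. -/
def Viable (N : InvestmentNetwork n) (c : Fin n → Fin n → ℝ) : Prop :=
  N.IsCollateral c ∧ N.NashEq c N.edges ∧ ∀ C, N.NashEq c C → C = N.edges

/-- The total collateral of a collateral matrix. -/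
noncomputable def total (c : Fin n → Fin n → ℝ) : ℝ :=
  ∑ k : Fin n, ∑ i : Fin n, c k i

/-- An optimal solution of the collateral minimization problem: a viable
collateral matrix of minimum total collateral. -/
def Optimal (N : InvestmentNetwork n) (c : Fin n → Fin n → ℝ) : Prop :=
  N.Viable c ∧ ∀ c', N.Viable c' → total c ≤ total c'

/-- All enterprises are (potentially) profitable:
`(1 + α k) * (X k - Z k) ≥ X k` where `X k = ∑ i, x k i`. -/
def Profitable (N : InvestmentNetwork n) : Prop :=
  ∀ k, N.IsEnterprise k → (∑ i, N.x k i) ≤ (1 + N.α k) * ((∑ i, N.x k i) - N.Z k)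

/-- Player `i` strictly prefers (ties being broken towards investing) to
cooperate rather than to defect w.r.t. enterprise `k`, when the cooperate
edges of the other decisions are those of `C`. -/
def StrictlyPrefersCoop (N : InvestmentNetwork n) (c : Fin n → Fin n → ℝ)
    (C : Finset (Fin n × Fin n)) (k i : Fin n) : Prop :=
  N.x k i ≤ N.edgeUtility c (insert (k, i) C) k i

/-- `σ` is an order of the edges along which iterated elimination of strictly
dominated strategies leads to the all-cooperate profile: at every step, given
that the previously processed edges cooperate, the player of the next edge
strictly prefers to cooperate whatever the remaining players do. -/
def ElimOrder (N : InvestmentNetwork n) (c : Fin n → Fin n → ℝ)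
    (σ : List (Fin n × Fin n)) : Prop :=
  σ.Nodup ∧ (∀ e, e ∈ σ ↔ e ∈ N.edges) ∧
    ∀ (t : ℕ) (ht : t < σ.length) (C : Finset (Fin n × Fin n)),
      N.IsProfile C → (∀ e ∈ σ.take t, e ∈ C) →
      N.StrictlyPrefersCoop c C (σ.get ⟨t, ht⟩).1 (σ.get ⟨t, ht⟩).2

end InvestmentNetwork

namespace InvestmentNetwork

variable {n : ℕ}

/-- The star sub-graph of the star decomposition associated to the enterprise
vertex `k`: only the investment opportunities into `k` are kept (this is the
single-enterprise collateral minimization problem induced on the star of `k`,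
stated on the same vertex set). -/
noncomputable def starSub (N : InvestmentNetwork n) (k : Fin n) :
    InvestmentNetwork n where
  x := fun j i => if j = k then N.x j i else 0
  Z := fun j => if j = k then N.Z j else 0
  α := N.α
  x_nonneg := by
    intro j i
    try dsimp only
    split_ifs
    · exact N.x_nonneg j i
    · exact le_refl 0
  Z_nonneg := by
    intro j
    try dsimp only
    split_ifs
    · exact N.Z_nonneg j
    · exact le_refl 0
  α_pos := by
    intro j hj
    obtain ⟨i, hi⟩ := hj
    try dsimp only at hi
    split_ifs at hi with h
    · exact N.α_pos j ⟨i, hi⟩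
    · exact absurd hi (lt_irrefl 0)
  Z_spike := by
    intro j hj
    try dsimp only
    split_ifs with h
    · subst h
      refine N.Z_spike j (fun i => ?_)
      have := hj i
      try dsimp only at this
      rwa [if_pos rfl] at this
    · rfl

/-- The restriction of a collateral matrix to the row of the enterprise `k`:
the collaterals that `k` offers its own investors. -/
noncomputable def rowMatrix (k : Fin n) (c : Fin n → Fin n → ℝ) :
    Fin n → Fin n → ℝ :=
  fun j i => if j = k then c j i else 0

/-- `v` is the optimal value of the collateral minimization problem for `N`:
it is the total collateral of some optimal (minimum-total viable) solution. -/
def IsOptTotal (N : InvestmentNetwork n) (v : ℝ) : Prop :=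
  ∃ c, N.Optimal c ∧ total c = v

/-- The investment graph of `N` is acyclic (no directed cycle). -/
def Acyclic (N : InvestmentNetwork n) : Prop :=
  ∀ v : Fin n, ¬ Relation.TransGen (fun a b => 0 < N.x a b) v v

end InvestmentNetwork


namespace InvestmentNetwork

variable {n : ℕ}

lemma mem_edges (N : InvestmentNetwork n) {e : Fin n × Fin n} :
    e ∈ N.edges ↔ 0 < N.x e.1 e.2 := by
  simp [edges]

lemma raised_nonneg (N : InvestmentNetwork n) (I : Finset (Fin n × Fin n)) (k : Fin n) :
    0 ≤ N.raised I k := by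
  refine Finset.sum_nonneg fun i _ => ?_
  split_ifs
  · exact N.x_nonneg k i
  · exact le_refl 0

lemma raised_mono (N : InvestmentNetwork n) {I J : Finset (Fin n × Fin n)} (h : I ⊆ J)
    (k : Fin n) : N.raised I k ≤ N.raised J k := by
  refine Finset.sum_le_sum fun i _ => ?_
  by_cases hi : (k, i) ∈ I
  · rw [if_pos hi, if_pos (h hi)]
  · rw [if_neg hi]
    split_ifs
    · exact N.x_nonneg k i
    · exact le_refl 0

lemma raised_insert (N : InvestmentNetwork n) {C : Finset (Fin n × Fin n)} {k i : Fin n}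
    (h : (k, i) ∉ C) : N.raised (insert (k, i) C) k = N.raised C k + N.x k i := by
  unfold raised
  rw [← Finset.sum_add_sum_compl {i}]
  rw [← Finset.sum_add_sum_compl {i} (f := fun j => if (k, j) ∈ C then N.x k j else 0)]
  simp only [Finset.sum_singleton]
  rw [if_pos (Finset.mem_insert_self _ _), if_neg h]
  have : ∀ j ∈ ({i} : Finset (Fin n))ᶜ,
      (if (k, j) ∈ insert (k, i) C then N.x k j else 0) = (if (k, j) ∈ C then N.x k j else 0) := by
    intro j hj
    have hji : j ≠ i := by simpa using hj
    have : ((k, j) ∈ insert (k, i) C) ↔ ((k, j) ∈ C) := by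
      constructor
      · intro hm
        rcases Finset.mem_insert.1 hm with h' | h'
        · exact absurd (congrArg Prod.snd h') hji
        · exact h'
      · exact fun hm => Finset.mem_insert_of_mem hm
    exact if_congr this rfl rfl
  rw [Finset.sum_congr rfl this]
  ring

lemma raised_insert_ne (N : InvestmentNetwork n) (C : Finset (Fin n × Fin n)) {k k' i : Fin n}
    (h : k' ≠ k) : N.raised (insert (k, i) C) k' = N.raised C k' := by
  unfold raised
  refine Finset.sum_congr rfl fun j _ => ?_
  have : ((k', j) ∈ insert (k, i) C) ↔ ((k', j) ∈ C) := by
    constructor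
    · intro hm
      rcases Finset.mem_insert.1 hm with h' | h'
      · exact absurd (congrArg Prod.fst h') h
      · exact h'
    · exact fun hm => Finset.mem_insert_of_mem hm
  exact if_congr this rfl rfl

lemma investSet_subset (N : InvestmentNetwork n) (C : Finset (Fin n × Fin n)) :
    N.investSet C ⊆ C :=
  Finset.filter_subset _ _

lemma subset_investSet (N : InvestmentNetwork n) {C I : Finset (Fin n × Fin n)}
    (hI : N.Consistent C I) : I ⊆ N.investSet C := by
  intro e he
  exact Finset.mem_filter.2 ⟨hI.1 he, I, hI, he⟩

lemma investSet_solvent (N : InvestmentNetwork n) {C : Finset (Fin n × Fin n)}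
    {e : Fin n × Fin n} (he : e ∈ N.investSet C) :
    N.Z e.2 ≤ N.raised (N.investSet C) e.2 := by
  obtain ⟨-, I, hI, heI⟩ := Finset.mem_filter.1 he
  exact le_trans (hI.2 e heI) (N.raised_mono (N.subset_investSet hI) e.2)

lemma consistent_investSet (N : InvestmentNetwork n) (C : Finset (Fin n × Fin n)) :
    N.Consistent C (N.investSet C) :=
  ⟨N.investSet_subset C, fun e he => N.investSet_solvent he⟩

lemma investSet_mono (N : InvestmentNetwork n) {C D : Finset (Fin n × Fin n)} (h : C ⊆ D) :
    N.investSet C ⊆ N.investSet D := by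
  intro e he
  obtain ⟨heC, I, hI, heI⟩ := Finset.mem_filter.1 he
  exact Finset.mem_filter.2 ⟨h heC, I, ⟨hI.1.trans h, hI.2⟩, heI⟩

/-- The return to `i` from enterprise `k`, as a function of the amount raised. -/
noncomputable def retAt (N : InvestmentNetwork n) (k i : Fin n) (r : ℝ) : ℝ :=
  max 0 ((1 + N.α k) * (r - N.Z k) * (N.x k i / r))

lemma ret_eq_retAt (N : InvestmentNetwork n) (I : Finset (Fin n × Fin n)) (k i : Fin n) :
    N.ret I k i = N.retAt k i (N.raised I k) := rfl

lemma retAt_nonneg (N : InvestmentNetwork n) (k i : Fin n) (r : ℝ) : 0 ≤ N.retAt k i r :=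
  le_max_left _ _

lemma retAt_mono (N : InvestmentNetwork n) (k i : Fin n) {r₁ r₂ : ℝ}
    (h0 : 0 ≤ r₁) (h : r₁ ≤ r₂) : N.retAt k i r₁ ≤ N.retAt k i r₂ := by
  by_cases hx : N.x k i = 0
  · simp [retAt, hx]
  have hxpos : 0 < N.x k i := lt_of_le_of_ne (N.x_nonneg k i) (Ne.symm hx)
  have hα : 0 < N.α k := N.α_pos k ⟨i, hxpos⟩
  have h1α : (0:ℝ) ≤ 1 + N.α k := by linarith
  rcases eq_or_lt_of_le h0 with h0' | h0'
  · have : N.retAt k i r₁ = 0 := by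
      simp [retAt, ← h0']
    rw [this]
    exact N.retAt_nonneg k i r₂
  have hr₂ : 0 < r₂ := lt_of_lt_of_le h0' h
  refine max_le_max (le_refl 0) ?_
  have e₁ : (1 + N.α k) * (r₁ - N.Z k) * (N.x k i / r₁)
      = (1 + N.α k) * (N.x k i - N.Z k * (N.x k i / r₁)) := by
    field_simp
  have e₂ : (1 + N.α k) * (r₂ - N.Z k) * (N.x k i / r₂)
      = (1 + N.α k) * (N.x k i - N.Z k * (N.x k i / r₂)) := by
    field_simp
  rw [e₁, e₂]
  have hdiv : N.x k i / r₂ ≤ N.x k i / r₁ :=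
    div_le_div_of_nonneg_left (N.x_nonneg k i) h0' h
  have := mul_le_mul_of_nonneg_left hdiv (N.Z_nonneg k)
  nlinarith

/-- The edge utility of a non-defaulting invest edge, as a function of the raised amount. -/
noncomputable def val (N : InvestmentNetwork n) (c : Fin n → Fin n → ℝ) (k i : Fin n)
    (r : ℝ) : ℝ :=
  if N.retAt k i r ≤ N.x k i - c k i then c k i + N.retAt k i r
  else if N.retAt k i r ≤ N.x k i then N.x k i
  else N.retAt k i r

lemma edgeUtility_eq_val (N : InvestmentNetwork n) (c : Fin n → Fin n → ℝ)
    {C : Finset (Fin n × Fin n)} {k i : Fin n} (h1 : (k, i) ∈ C) (h2 : (k, i) ∈ N.investSet C) :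
    N.edgeUtility c C k i = N.val c k i (N.raised (N.investSet C) k) := by
  unfold edgeUtility val
  rw [if_neg (by simpa using h1), if_neg (by simpa using h2)]
  rfl

lemma edgeUtility_of_defect (N : InvestmentNetwork n) (c : Fin n → Fin n → ℝ)
    {C : Finset (Fin n × Fin n)} {k i : Fin n} (h1 : (k, i) ∉ C) :
    N.edgeUtility c C k i = N.x k i := by
  unfold edgeUtility
  rw [if_pos h1]

lemma edgeUtility_of_default (N : InvestmentNetwork n) (c : Fin n → Fin n → ℝ)
    {C : Finset (Fin n × Fin n)} {k i : Fin n} (h1 : (k, i) ∈ C) (h2 : (k, i) ∉ N.investSet C) :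
    N.edgeUtility c C k i = 0 := by
  unfold edgeUtility
  rw [if_neg (by simpa using h1), if_pos h2]

lemma val_nonneg (N : InvestmentNetwork n) {c : Fin n → Fin n → ℝ} {k i : Fin n}
    (hc : 0 ≤ c k i) (r : ℝ) : 0 ≤ N.val c k i r := by
  unfold val
  have h0 := N.retAt_nonneg k i r
  have hx := N.x_nonneg k i
  split_ifs <;> linarith

lemma val_mono (N : InvestmentNetwork n) {c : Fin n → Fin n → ℝ} {k i : Fin n}
    (hc : 0 ≤ c k i) {r₁ r₂ : ℝ} (h0 : 0 ≤ r₁) (h : r₁ ≤ r₂) :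
    N.val c k i r₁ ≤ N.val c k i r₂ := by
  have hret := N.retAt_mono k i h0 h
  have h0' := N.retAt_nonneg k i r₁
  unfold val
  split_ifs <;> linarith

lemma le_val (N : InvestmentNetwork n) {c : Fin n → Fin n → ℝ} {k i : Fin n}
    (hc : 0 ≤ c k i) {r : ℝ} (hx : N.x k i ≤ N.retAt k i r) :
    N.x k i ≤ N.val c k i r := by
  unfold val
  split_ifs <;> linarith

lemma edgeUtility_nonneg (N : InvestmentNetwork n) {c : Fin n → Fin n → ℝ}
    (hc : N.IsCollateral c) (C : Finset (Fin n × Fin n)) (k i : Fin n) :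
    0 ≤ N.edgeUtility c C k i := by
  by_cases h1 : (k, i) ∈ C
  · by_cases h2 : (k, i) ∈ N.investSet C
    · rw [N.edgeUtility_eq_val c h1 h2]
      exact N.val_nonneg (hc k i).1 _
    · rw [N.edgeUtility_of_default c h1 h2]
  · rw [N.edgeUtility_of_defect c h1]
    exact N.x_nonneg k i

lemma edgeUtility_mono (N : InvestmentNetwork n) {c : Fin n → Fin n → ℝ}
    (hc : N.IsCollateral c) {C D : Finset (Fin n × Fin n)} {k i : Fin n}
    (he : (k, i) ∈ C) (h : C ⊆ D) :
    N.edgeUtility c C k i ≤ N.edgeUtility c D k i := by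
  by_cases h2 : (k, i) ∈ N.investSet C
  · have h2' : (k, i) ∈ N.investSet D := N.investSet_mono h h2
    rw [N.edgeUtility_eq_val c he h2, N.edgeUtility_eq_val c (h he) h2']
    exact N.val_mono (hc k i).1 (N.raised_nonneg _ k)
      (N.raised_mono (N.investSet_mono h) k)
  · rw [N.edgeUtility_of_default c he h2]
    exact N.edgeUtility_nonneg hc D k i

end InvestmentNetwork

namespace InvestmentNetwork

variable {n : ℕ}

lemma raised_deviation_le (N : InvestmentNetwork n) {C C' : Finset (Fin n × Fin n)} {j : Fin n}
    (hdev : Deviation C C' j) (k : Fin n) (hk : (k, j) ∈ C' → (k, j) ∈ C) :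
    N.raised C' k ≤ N.raised C k := by
  refine Finset.sum_le_sum fun i _ => ?_
  by_cases hij : i = j
  · subst hij
    by_cases h1 : (k, i) ∈ C'
    · rw [if_pos h1, if_pos (hk h1)]
    · rw [if_neg h1]
      split_ifs
      · exact N.x_nonneg k i
      · exact le_refl 0
  · have hiff := hdev (k, i) (by simpa using hij)
    by_cases h1 : (k, i) ∈ C'
    · rw [if_pos h1, if_pos (hiff.2 h1)]
    · rw [if_neg h1, if_neg (fun hm => h1 (hiff.1 hm))]

lemma raised_deviation_le_insert (N : InvestmentNetwork n) {C C' : Finset (Fin n × Fin n)}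
    {j : Fin n} (hdev : Deviation C C' j) (k : Fin n) :
    N.raised C' k ≤ N.raised (insert (k, j) C) k := by
  refine Finset.sum_le_sum fun i _ => ?_
  by_cases hij : i = j
  · subst hij
    rw [if_pos (Finset.mem_insert_self _ _)]
    split_ifs
    · exact le_refl _
    · exact N.x_nonneg k i
  · have hiff := hdev (k, i) (by simpa using hij)
    by_cases h1 : (k, i) ∈ C'
    · rw [if_pos h1, if_pos (Finset.mem_insert_of_mem (hiff.2 h1))]
    · rw [if_neg h1]
      split_ifs
      · exact N.x_nonneg k i
      · exact le_refl 0

lemma coopCount_mono {C D : Finset (Fin n × Fin n)} (h : C ⊆ D) (i : Fin n) :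
    coopCount C i ≤ coopCount D i :=
  Finset.card_le_card (Finset.filter_subset_filter _ h)

set_option maxHeartbeats 1000000 in
/-- The key Nash lemma: an "internally stable" profile, from which every missing
edge is strictly unattractive to add, is a Nash equilibrium. -/
lemma nash_of_stable (N : InvestmentNetwork n) {c : Fin n → Fin n → ℝ}
    (hc : N.IsCollateral c) (hirr : ∀ e ∈ N.edges, e.1 ≠ e.2)
    {Cs : Finset (Fin n × Fin n)} (hsub : Cs ⊆ N.edges)
    (hS0 : N.investSet Cs = Cs)
    (hS1 : ∀ e ∈ Cs, N.x e.1 e.2 ≤ N.edgeUtility c Cs e.1 e.2)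
    (hS2 : ∀ e ∈ N.edges, e ∉ Cs → N.edgeUtility c (insert e Cs) e.1 e.2 < N.x e.1 e.2) :
    N.NashEq c Cs := by
  refine ⟨hsub, ?_⟩
  intro j C' hC' hdev
  -- strict bound on added edges
  have key : ∀ k', (k', j) ∈ C' → (k', j) ∉ Cs → N.edgeUtility c C' k' j < N.x k' j := by
    intro k' hmem hnot
    have hedge : (k', j) ∈ N.edges := hC' hmem
    have hxpos : 0 < N.x k' j := (N.mem_edges).1 hedge
    by_cases hinv : (k', j) ∈ N.investSet C'
    · -- the investor `j` is solvent at `Cs` as well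
      have hjj : ((j, j) ∈ C' → (j, j) ∈ Cs) := by
        intro hm
        exact absurd rfl (hirr (j, j) (hC' hm))
      have hZ : N.Z j ≤ N.raised (N.investSet Cs) j := by
        have h1 : N.Z j ≤ N.raised (N.investSet C') j := N.investSet_solvent hinv
        have h2 : N.raised (N.investSet C') j ≤ N.raised C' j :=
          N.raised_mono (N.investSet_subset C') j
        have h3 : N.raised C' j ≤ N.raised Cs j := N.raised_deviation_le hdev j hjj
        rw [hS0]
        linarith
      have hne : k' ≠ j := hirr (k', j) hedge
      -- (k',j) joins the invest set of `insert (k',j) Cs`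
      have hIcons : N.Consistent (insert (k', j) Cs) (insert (k', j) (N.investSet Cs)) := by
        constructor
        · exact Finset.insert_subset_insert _ (N.investSet_subset Cs)
        · intro f hf
          rcases Finset.mem_insert.1 hf with rfl | hf'
          · have : N.raised (insert (k', j) (N.investSet Cs)) j
                = N.raised (N.investSet Cs) j := N.raised_insert_ne _ (Ne.symm hne)
            rw [this]
            exact hZ
          · exact le_trans (N.investSet_solvent hf')
              (N.raised_mono (Finset.subset_insert _ _) f.2)
      have hmemI : (k', j) ∈ N.investSet (insert (k', j) Cs) :=
        N.subset_investSet hIcons (Finset.mem_insert_self _ _)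
      have hIS : N.investSet (insert (k', j) Cs) = insert (k', j) Cs := by
        refine subset_antisymm (N.investSet_subset _) ?_
        intro f hf
        rcases Finset.mem_insert.1 hf with rfl | hf'
        · exact hmemI
        · refine N.investSet_mono (Finset.subset_insert _ _) ?_
          rw [hS0]
          exact hf'
      -- compare raised amounts
      have hraised : N.raised (N.investSet C') k' ≤ N.raised (N.investSet (insert (k', j) Cs)) k' := by
        rw [hIS]
        exact le_trans (N.raised_mono (N.investSet_subset C') k')
          (N.raised_deviation_le_insert hdev k')
      calc N.edgeUtility c C' k' j
          = N.val c k' j (N.raised (N.investSet C') k') := N.edgeUtility_eq_val c hmem hinv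
        _ ≤ N.val c k' j (N.raised (N.investSet (insert (k', j) Cs)) k') :=
            N.val_mono (hc k' j).1 (N.raised_nonneg _ _) hraised
        _ = N.edgeUtility c (insert (k', j) Cs) k' j :=
            (N.edgeUtility_eq_val c (Finset.mem_insert_self _ _) hmemI).symm
        _ < N.x k' j := hS2 (k', j) hedge hnot
    · rw [N.edgeUtility_of_default c hmem hinv]
      exact hxpos
  -- pointwise bound on all terms of the utility sums
  have hterm : ∀ k' : Fin n,
      (if (k', j) ∈ N.edges then N.edgeUtility c C' k' j else 0)
        ≤ (if (k', j) ∈ N.edges then N.edgeUtility c Cs k' j else 0) := by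
    intro k'
    by_cases hedge : (k', j) ∈ N.edges
    · rw [if_pos hedge, if_pos hedge]
      by_cases hmem' : (k', j) ∈ C'
      · by_cases hmem : (k', j) ∈ Cs
        · -- kept cooperating edge
          have hIs : (k', j) ∈ N.investSet Cs := by rw [hS0]; exact hmem
          by_cases hinv : (k', j) ∈ N.investSet C'
          · rw [N.edgeUtility_eq_val c hmem' hinv, N.edgeUtility_eq_val c hmem hIs]
            refine N.val_mono (hc k' j).1 (N.raised_nonneg _ _) ?_
            have h2 : N.raised (N.investSet C') k' ≤ N.raised C' k' :=
              N.raised_mono (N.investSet_subset C') k'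
            have h3 : N.raised C' k' ≤ N.raised Cs k' :=
              N.raised_deviation_le hdev k' (fun _ => hmem)
            rw [hS0]
            linarith
          · rw [N.edgeUtility_of_default c hmem' hinv]
            exact N.edgeUtility_nonneg hc Cs k' j
        · -- added edge: strict bound
          have := key k' hmem' hmem
          rw [N.edgeUtility_of_defect c hmem]
          exact le_of_lt this
      · by_cases hmem : (k', j) ∈ Cs
        · -- dropped edge
          rw [N.edgeUtility_of_defect c hmem']
          exact hS1 (k', j) hmem
        · rw [N.edgeUtility_of_defect c hmem', N.edgeUtility_of_defect c hmem]
    · rw [if_neg hedge, if_neg hedge]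
  by_cases hA : C' ⊆ Cs
  · -- no edges added
    have hle : N.utility c C' j ≤ N.utility c Cs j :=
      Finset.sum_le_sum fun k' _ => hterm k'
    rcases lt_or_eq_of_le hle with hlt | heq
    · exact Or.inl hlt
    · exact Or.inr ⟨heq, coopCount_mono hA j⟩
  · -- some edge was added: strict decrease
    obtain ⟨e₀, he₀C', he₀⟩ := Finset.not_subset.1 hA
    have he₀j : e₀.2 = j := by
      by_contra hne
      exact he₀ ((hdev e₀ hne).2 he₀C')
    have he₀' : (e₀.1, j) ∈ C' := by rw [← he₀j]; exact he₀C'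
    have he₀'' : (e₀.1, j) ∉ Cs := by rw [← he₀j]; exact he₀
    refine Or.inl (Finset.sum_lt_sum (fun k' _ => hterm k') ⟨e₀.1, Finset.mem_univ _, ?_⟩)
    have hedge : (e₀.1, j) ∈ N.edges := hC' he₀'
    rw [if_pos hedge, if_pos hedge, N.edgeUtility_of_defect c he₀'']
    exact key e₀.1 he₀' he₀''

end InvestmentNetwork

namespace InvestmentNetwork

variable {n : ℕ}

/-- One round of flight: keep only the cooperating edges that are worth keeping. -/
noncomputable def flee (N : InvestmentNetwork n) (c : Fin n → Fin n → ℝ)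
    (S : Finset (Fin n × Fin n)) : Finset (Fin n × Fin n) :=
  S.filter (fun e => N.x e.1 e.2 ≤ N.edgeUtility c S e.1 e.2)

lemma flee_subset (N : InvestmentNetwork n) (c : Fin n → Fin n → ℝ)
    (S : Finset (Fin n × Fin n)) : N.flee c S ⊆ S :=
  Finset.filter_subset _ _

/-- If a viable collateral admits a profile from which every missing edge is strictly
unattractive to add, then that profile must be everything. -/
lemma kill (N : InvestmentNetwork n) {c : Fin n → Fin n → ℝ}
    (hv : N.Viable c) (hirr : ∀ e ∈ N.edges, e.1 ≠ e.2)
    {T : Finset (Fin n × Fin n)} (hT : T ⊆ N.edges)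
    (hHT : ∀ e ∈ N.edges, e ∉ T → N.edgeUtility c (insert e T) e.1 e.2 < N.x e.1 e.2) :
    T = N.edges := by
  obtain ⟨hc, -, huniq⟩ := hv
  set f : ℕ → Finset (Fin n × Fin n) := fun s => (N.flee c)^[s] T with hf
  have hsucc : ∀ s, f (s + 1) = N.flee c (f s) := by
    intro s
    simp [hf, Function.iterate_succ_apply']
  have hmono1 : ∀ s, f (s + 1) ⊆ f s := by
    intro s
    rw [hsucc]
    exact N.flee_subset c _
  have hchain : ∀ s t, s ≤ t → f t ⊆ f s := by
    intro s t hst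
    induction t with
    | zero => simpa [Nat.le_zero.1 hst]
    | succ t ih =>
      rcases Nat.lt_or_ge s (t + 1) with h | h
      · exact (hmono1 t).trans (ih (Nat.lt_succ_iff.1 h))
      · have : s = t + 1 := le_antisymm hst h
        subst this
        exact Finset.Subset.refl _
  have hfix : ∃ s, N.flee c (f s) = f s := by
    by_contra hno
    push_neg at hno
    have hdec : ∀ s, (f (s + 1)).card < (f s).card := by
      intro s
      refine Finset.card_lt_card ?_
      rw [hsucc]
      exact (N.flee_subset c (f s)).ssubset_of_ne (hno s)
    have hle : ∀ s, (f s).card + s ≤ (f 0).card := by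
      intro s
      induction s with
      | zero => simp
      | succ s ih => have := hdec s; omega
    have := hle ((f 0).card + 1)
    omega
  obtain ⟨s₀, hs₀⟩ := hfix
  set Cs := f s₀ with hCs
  have hstab : ∀ d, f (s₀ + d) = Cs := by
    intro d
    induction d with
    | zero => rfl
    | succ d ih => rw [show s₀ + (d + 1) = (s₀ + d) + 1 by ring, hsucc, ih]; exact hs₀
  have hCs_sub : ∀ s, Cs ⊆ f s := by
    intro s
    rcases Nat.le_total s s₀ with h | h
    · exact hchain s s₀ h
    · obtain ⟨d, rfl⟩ := Nat.exists_eq_add_of_le h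
      rw [hstab d]
  have hCsT : Cs ⊆ T := hCs_sub 0
  have hCsE : Cs ⊆ N.edges := hCsT.trans hT
  have hS1 : ∀ e ∈ Cs, N.x e.1 e.2 ≤ N.edgeUtility c Cs e.1 e.2 := by
    intro e he
    have : e ∈ N.flee c Cs := by rw [hs₀] at *; exact he
    exact (Finset.mem_filter.1 this).2
  have hS0 : N.investSet Cs = Cs := by
    refine subset_antisymm (N.investSet_subset Cs) ?_
    intro e he
    by_contra hni
    have h0 : N.edgeUtility c Cs e.1 e.2 = 0 := by
      have := N.edgeUtility_of_default c (C := Cs) (k := e.1) (i := e.2) (by exact he) (by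
        intro hmem
        exact hni hmem)
      exact this
    have := hS1 e he
    rw [h0] at this
    exact absurd (lt_of_lt_of_le ((N.mem_edges).1 (hCsE he)) this) (lt_irrefl 0)
  have hS2 : ∀ e ∈ N.edges, e ∉ Cs → N.edgeUtility c (insert e Cs) e.1 e.2 < N.x e.1 e.2 := by
    intro e heE heCs
    by_cases heT : e ∈ T
    · -- the edge fled at some stage
      have hflee : ∃ s, e ∈ f s ∧ e ∉ N.flee c (f s) := by
        by_contra hno
        push_neg at hno
        have : ∀ s, e ∈ f s := by
          intro s
          induction s with
          | zero => exact heT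
          | succ s ih => rw [hsucc]; exact hno s ih
        exact heCs (this s₀)
      obtain ⟨s, hes, hes'⟩ := hflee
      have hlt : N.edgeUtility c (f s) e.1 e.2 < N.x e.1 e.2 := by
        by_contra hge
        push_neg at hge
        exact hes' (Finset.mem_filter.2 ⟨hes, hge⟩)
      have hsubs : insert e Cs ⊆ f s := Finset.insert_subset hes (hCs_sub s)
      calc N.edgeUtility c (insert e Cs) e.1 e.2
          ≤ N.edgeUtility c (f s) e.1 e.2 := by
            have hmem : (e.1, e.2) ∈ insert e Cs := by
              rw [show (e.1, e.2) = e from rfl]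
              exact Finset.mem_insert_self _ _
            exact N.edgeUtility_mono hc hmem hsubs
        _ < N.x e.1 e.2 := hlt
    · calc N.edgeUtility c (insert e Cs) e.1 e.2
          ≤ N.edgeUtility c (insert e T) e.1 e.2 := by
            have hmem : (e.1, e.2) ∈ insert e Cs := by
              rw [show (e.1, e.2) = e from rfl]
              exact Finset.mem_insert_self _ _
            exact N.edgeUtility_mono hc hmem (Finset.insert_subset_insert _ hCsT)
        _ < N.x e.1 e.2 := hHT e heE heT
  have hnash : N.NashEq c Cs := N.nash_of_stable hc hirr hCsE hS0 hS1 hS2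
  have hEq : Cs = N.edges := huniq Cs hnash
  exact subset_antisymm hT (hEq ▸ hCsT)

lemma X_pos_of_enterprise (N : InvestmentNetwork n) {k : Fin n} (hk : N.IsEnterprise k) :
    0 < ∑ i, N.x k i := by
  obtain ⟨i, hi⟩ := hk
  have := Finset.single_le_sum (f := fun i => N.x k i) (fun j _ => N.x_nonneg k j)
    (Finset.mem_univ i)
  linarith

lemma Z_le_X (N : InvestmentNetwork n) (hprof : N.Profitable) (k : Fin n) :
    N.Z k ≤ ∑ i, N.x k i := by
  by_cases hent : N.IsEnterprise k
  · have h1 := hprof k hent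
    have hα : 0 < N.α k := N.α_pos k hent
    nlinarith [N.X_pos_of_enterprise hent]
  · have hz : ∀ i, N.x k i = 0 := by
      intro i
      by_contra h
      exact hent ⟨i, lt_of_le_of_ne (N.x_nonneg k i) (Ne.symm h)⟩
    rw [N.Z_spike k hz]
    exact Finset.sum_nonneg fun i _ => N.x_nonneg k i

lemma raised_edges (N : InvestmentNetwork n) (k : Fin n) :
    N.raised N.edges k = ∑ i, N.x k i := by
  refine Finset.sum_congr rfl fun i _ => ?_
  by_cases h : (k, i) ∈ N.edges
  · rw [if_pos h]
  · rw [if_neg h]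
    have : ¬ 0 < N.x k i := fun hp => h ((N.mem_edges).2 hp)
    linarith [N.x_nonneg k i]

lemma investSet_edges (N : InvestmentNetwork n) (hprof : N.Profitable) :
    N.investSet N.edges = N.edges := by
  refine subset_antisymm (N.investSet_subset _) ?_
  refine N.subset_investSet ⟨le_refl _, ?_⟩
  intro e _
  rw [N.raised_edges e.2]
  exact N.Z_le_X hprof e.2

lemma retAt_edges_ge (N : InvestmentNetwork n) (hprof : N.Profitable) {k i : Fin n}
    (h : (k, i) ∈ N.edges) : N.x k i ≤ N.retAt k i (∑ j, N.x k j) := by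
  have hxpos : 0 < N.x k i := (N.mem_edges).1 h
  have hent : N.IsEnterprise k := ⟨i, hxpos⟩
  have hX : 0 < ∑ j, N.x k j := N.X_pos_of_enterprise hent
  have h1 := hprof k hent
  have h2 : (∑ j, N.x k j) * (N.x k i / ∑ j, N.x k j)
      ≤ (1 + N.α k) * ((∑ j, N.x k j) - N.Z k) * (N.x k i / ∑ j, N.x k j) :=
    mul_le_mul_of_nonneg_right h1 (div_nonneg (N.x_nonneg k i) (le_of_lt hX))
  have h3 : (∑ j, N.x k j) * (N.x k i / ∑ j, N.x k j) = N.x k i := by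
    field_simp
  exact le_trans (le_trans (le_of_eq h3.symm) h2) (le_max_right _ _)

lemma edgeUtility_edges_ge (N : InvestmentNetwork n) (hprof : N.Profitable)
    {c : Fin n → Fin n → ℝ} (hc : N.IsCollateral c) {k i : Fin n} (h : (k, i) ∈ N.edges) :
    N.x k i ≤ N.edgeUtility c N.edges k i := by
  rw [N.edgeUtility_eq_val c h (by rw [N.investSet_edges hprof]; exact h)]
  refine N.le_val (hc k i).1 ?_
  rw [N.investSet_edges hprof, N.raised_edges k]
  exact N.retAt_edges_ge hprof h

/-- All-cooperate is always a Nash equilibrium (profitability alone). -/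
lemma nash_edges (N : InvestmentNetwork n) (hprof : N.Profitable)
    {c : Fin n → Fin n → ℝ} (hc : N.IsCollateral c)
    (hirr : ∀ e ∈ N.edges, e.1 ≠ e.2) : N.NashEq c N.edges := by
  refine N.nash_of_stable hc hirr (le_refl _) (N.investSet_edges hprof) ?_ ?_
  · intro e he
    exact N.edgeUtility_edges_ge hprof hc he
  · intro e he he'
    exact absurd he he'

end InvestmentNetwork

namespace InvestmentNetwork

variable {n : ℕ}

lemma irr_of_acyclic (N : InvestmentNetwork n) (hacyc : N.Acyclic) :
    ∀ e ∈ N.edges, e.1 ≠ e.2 := by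
  intro e he heq
  have hx := (N.mem_edges).1 he
  rw [← heq] at hx
  exact hacyc e.1 (Relation.TransGen.single hx)

lemma star_edges (N : InvestmentNetwork n) (k : Fin n) :
    (N.starSub k).edges = N.edges.filter (fun e => e.1 = k) := by
  ext e
  simp only [edges, Finset.mem_filter, Finset.mem_univ, true_and]
  change (0 < (if e.1 = k then N.x e.1 e.2 else 0)) ↔ (0 < N.x e.1 e.2 ∧ e.1 = k)
  constructor
  · intro h
    split_ifs at h with h1
    · exact ⟨h, h1⟩
    · exact absurd h (lt_irrefl 0)
  · intro ⟨h1, h2⟩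
    rw [if_pos h2]
    exact h1

lemma star_edges_subset (N : InvestmentNetwork n) (k : Fin n) :
    (N.starSub k).edges ⊆ N.edges := by
  rw [N.star_edges k]
  exact Finset.filter_subset _ _

lemma mem_star_edges (N : InvestmentNetwork n) {k : Fin n} {e : Fin n × Fin n}
    (he : e ∈ (N.starSub k).edges) : e ∈ N.edges ∧ e.1 = k := by
  rw [N.star_edges k] at he
  exact Finset.mem_filter.1 he |>.imp_left id |>.imp_right id |> fun h => ⟨h.1, h.2⟩

lemma star_irr (N : InvestmentNetwork n) (hacyc : N.Acyclic) (k : Fin n) :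
    ∀ e ∈ (N.starSub k).edges, e.1 ≠ e.2 := by
  intro e he
  exact N.irr_of_acyclic hacyc e ((N.mem_star_edges he).1)

lemma star_investor_ne (N : InvestmentNetwork n) (hacyc : N.Acyclic) {k : Fin n}
    {e : Fin n × Fin n} (he : e ∈ (N.starSub k).edges) : e.2 ≠ k := by
  obtain ⟨h1, h2⟩ := N.mem_star_edges he
  rw [← h2]
  exact (N.irr_of_acyclic hacyc e h1).symm

lemma star_raised (N : InvestmentNetwork n) (k : Fin n) (S : Finset (Fin n × Fin n)) :
    (N.starSub k).raised S k = N.raised S k := by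
  refine Finset.sum_congr rfl fun i _ => ?_
  split_ifs
  · show (if k = k then N.x k i else 0) = N.x k i
    rw [if_pos rfl]
  · rfl

lemma star_investSet (N : InvestmentNetwork n) (hacyc : N.Acyclic) (k : Fin n)
    {S : Finset (Fin n × Fin n)} (hS : S ⊆ (N.starSub k).edges) :
    (N.starSub k).investSet S = S := by
  refine subset_antisymm ((N.starSub k).investSet_subset S) ?_
  refine (N.starSub k).subset_investSet ⟨Finset.Subset.refl _, ?_⟩
  intro e he
  have hne : e.2 ≠ k := N.star_investor_ne hacyc (hS he)
  have : (N.starSub k).Z e.2 = 0 := by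
    show (if e.2 = k then N.Z e.2 else 0) = 0
    rw [if_neg hne]
  rw [this]
  exact (N.starSub k).raised_nonneg S e.2

lemma star_retAt (N : InvestmentNetwork n) (k i : Fin n) (r : ℝ) :
    (N.starSub k).retAt k i r = N.retAt k i r := by
  unfold retAt
  have h1 : (N.starSub k).α k = N.α k := rfl
  have h2 : (N.starSub k).Z k = N.Z k := by
    show (if k = k then N.Z k else 0) = N.Z k
    rw [if_pos rfl]
  have h3 : (N.starSub k).x k i = N.x k i := by
    show (if k = k then N.x k i else 0) = N.x k i
    rw [if_pos rfl]
  rw [h1, h2, h3]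

lemma star_val (N : InvestmentNetwork n) (k : Fin n) (c : Fin n → Fin n → ℝ) (i : Fin n)
    (r : ℝ) : (N.starSub k).val (rowMatrix k c) k i r = N.val c k i r := by
  unfold val
  have h3 : (N.starSub k).x k i = N.x k i := by
    show (if k = k then N.x k i else 0) = N.x k i
    rw [if_pos rfl]
  have h4 : rowMatrix k c k i = c k i := by
    show (if k = k then c k i else 0) = c k i
    rw [if_pos rfl]
  rw [N.star_retAt k i r, h3, h4]

lemma rowMatrix_collateral (N : InvestmentNetwork n) (k : Fin n) {c : Fin n → Fin n → ℝ}
    (hc : N.IsCollateral c) : (N.starSub k).IsCollateral (rowMatrix k c) := by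
  intro j i
  constructor
  · show 0 ≤ (if j = k then c j i else 0)
    split_ifs
    · exact (hc j i).1
    · exact le_refl 0
  · intro hx
    show (if j = k then c j i else 0) = 0
    split_ifs with h
    · refine (hc j i).2 ?_
      have : (if j = k then N.x j i else 0) = 0 := hx
      rwa [if_pos h] at this
    · rfl

lemma star_profitable (N : InvestmentNetwork n) (hprof : N.Profitable) (k : Fin n) :
    (N.starSub k).Profitable := by
  intro j hj
  obtain ⟨i, hi⟩ := hj
  have hjk : j = k := by
    by_contra h
    have : (N.starSub k).x j i = 0 := by
      show (if j = k then N.x j i else 0) = 0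
      rw [if_neg h]
    rw [this] at hi
    exact lt_irrefl 0 hi
  subst hjk
  have hx : ∀ i', (N.starSub j).x j i' = N.x j i' := by
    intro i'
    show (if j = j then N.x j i' else 0) = N.x j i'
    rw [if_pos rfl]
  have hZ : (N.starSub j).Z j = N.Z j := by
    show (if j = j then N.Z j else 0) = N.Z j
    rw [if_pos rfl]
  have hα : (N.starSub j).α j = N.α j := rfl
  have hsum : (∑ i', (N.starSub j).x j i') = ∑ i', N.x j i' :=
    Finset.sum_congr rfl fun i' _ => hx i'
  rw [hsum, hZ, hα]
  refine hprof j ⟨i, ?_⟩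
  rwa [hx i] at hi
  
lemma star_utility (N : InvestmentNetwork n) (k : Fin n) (c₀ : Fin n → Fin n → ℝ)
    (S : Finset (Fin n × Fin n)) (i : Fin n) :
    (N.starSub k).utility c₀ S i
      = (if (k, i) ∈ (N.starSub k).edges then (N.starSub k).edgeUtility c₀ S k i else 0) := by
  unfold utility
  refine Finset.sum_eq_single_of_mem k (Finset.mem_univ k) ?_
  intro b _ hb
  rw [if_neg]
  intro hmem
  exact hb ((N.mem_star_edges hmem).2)

lemma coopCount_insert {C : Finset (Fin n × Fin n)} {k i : Fin n} (h : (k, i) ∉ C) :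
    coopCount (insert (k, i) C) i = coopCount C i + 1 := by
  unfold coopCount
  rw [Finset.filter_insert, if_pos rfl,
    Finset.card_insert_of_notMem (fun hm => h (Finset.filter_subset _ _ hm))]

/-- At a star Nash equilibrium, adding a missing edge is strictly unattractive. -/
lemma star_nash_add_bound (N : InvestmentNetwork n) (k : Fin n) {c₀ : Fin n → Fin n → ℝ}
    {S : Finset (Fin n × Fin n)} (hnash : (N.starSub k).NashEq c₀ S) {i : Fin n}
    (hi : (k, i) ∈ (N.starSub k).edges) (hiS : (k, i) ∉ S) :
    (N.starSub k).edgeUtility c₀ (insert (k, i) S) k i < (N.starSub k).x k i := by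
  obtain ⟨hprofS, hnash2⟩ := hnash
  have hprofC' : (N.starSub k).IsProfile (insert (k, i) S) :=
    Finset.insert_subset hi hprofS
  have hdev : Deviation S (insert (k, i) S) i := by
    intro e hne
    constructor
    · exact fun hm => Finset.mem_insert_of_mem hm
    · intro hm
      rcases Finset.mem_insert.1 hm with h' | h'
      · exact absurd (congrArg Prod.snd h') hne
      · exact h'
  have := hnash2 i (insert (k, i) S) hprofC' hdev
  have hcount : ¬ (coopCount (insert (k, i) S) i ≤ coopCount S i) := by
    rw [coopCount_insert hiS]
    omega
  have hu' : (N.starSub k).utility c₀ (insert (k, i) S) i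
      = (N.starSub k).edgeUtility c₀ (insert (k, i) S) k i := by
    rw [N.star_utility k c₀ _ i, if_pos hi]
  have hu : (N.starSub k).utility c₀ S i = (N.starSub k).x k i := by
    rw [N.star_utility k c₀ S i, if_pos hi, (N.starSub k).edgeUtility_of_defect c₀ hiS]
  rcases this with h | h
  · rw [hu', hu] at h
    exact h
  · exact absurd h.2 hcount

/-- For any Nash equilibrium, each cooperating firm invests (no cooperation in default). -/
lemma nash_investSet_eq (N : InvestmentNetwork n) (hirr : ∀ e ∈ N.edges, e.1 ≠ e.2)
    {c : Fin n → Fin n → ℝ} {C : Finset (Fin n × Fin n)} (hnash : N.NashEq c C) :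
    N.investSet C = C := by
  obtain ⟨hprofC, hnash2⟩ := hnash
  refine subset_antisymm (N.investSet_subset C) ?_
  intro e₀ he₀
  by_contra hni
  set j := e₀.2 with hj
  -- every cooperating edge of `j` is out of the invest set
  have hclaim : ∀ f ∈ C, f.2 = j → f ∉ N.investSet C := by
    intro f hf hfj hfi
    have hZ : N.Z j ≤ N.raised (N.investSet C) j := by
      have := N.investSet_solvent hfi
      rwa [hfj] at this
    have hcons : N.Consistent C (insert e₀ (N.investSet C)) := by
      constructor
      · exact Finset.insert_subset he₀ (N.investSet_subset C)
      · intro g hg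
        rcases Finset.mem_insert.1 hg with rfl | hg'
        · have : N.raised (insert (g.1, g.2) (N.investSet C)) g.2
              = N.raised (N.investSet C) g.2 :=
            N.raised_insert_ne _ (Ne.symm (hirr g (hprofC he₀)))
          rw [show (insert g (N.investSet C)) = insert (g.1, g.2) (N.investSet C) by rfl, this]
          exact hZ
        · exact le_trans (N.investSet_solvent hg')
            (N.raised_mono (Finset.subset_insert _ _) g.2)
    exact hni (N.subset_investSet hcons (Finset.mem_insert_self _ _))
  -- deviation: defect on all edges
  set C'' := C.filter (fun e => e.2 ≠ j) with hC''
  have hprofC'' : N.IsProfile C'' := (Finset.filter_subset _ _).trans hprofC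
  have hdev : Deviation C C'' j := by
    intro e hne
    constructor
    · exact fun hm => Finset.mem_filter.2 ⟨hm, hne⟩
    · exact fun hm => (Finset.mem_filter.1 hm).1
  have hterm : ∀ k', (if (k', j) ∈ N.edges then N.edgeUtility c C k' j else 0)
      ≤ (if (k', j) ∈ N.edges then N.edgeUtility c C'' k' j else 0) := by
    intro k'
    by_cases hedge : (k', j) ∈ N.edges
    · rw [if_pos hedge, if_pos hedge]
      have h2 : (k', j) ∉ C'' := by
        intro hm
        exact (Finset.mem_filter.1 hm).2 rfl
      rw [N.edgeUtility_of_defect c h2]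
      by_cases h1 : (k', j) ∈ C
      · rw [N.edgeUtility_of_default c h1 (hclaim (k', j) h1 rfl)]
        exact le_of_lt ((N.mem_edges).1 hedge)
      · rw [N.edgeUtility_of_defect c h1]
    · rw [if_neg hedge, if_neg hedge]
  have hstrict : N.utility c C j < N.utility c C'' j := by
    refine Finset.sum_lt_sum (fun k' _ => hterm k') ⟨e₀.1, Finset.mem_univ _, ?_⟩
    have he₀e : (e₀.1, j) ∈ N.edges := by
      rw [hj]
      exact hprofC he₀
    rw [if_pos he₀e, if_pos he₀e]
    have h2 : (e₀.1, j) ∉ C'' := fun hm => (Finset.mem_filter.1 hm).2 rfl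
    have h1 : (e₀.1, j) ∈ C := by rw [hj]; exact he₀
    rw [N.edgeUtility_of_defect c h2, N.edgeUtility_of_default c h1 (hclaim _ h1 rfl)]
    exact (N.mem_edges).1 he₀e
  rcases hnash2 j C'' hprofC'' hdev with h | h
  · linarith
  · linarith [h.1]

end InvestmentNetwork

namespace InvestmentNetwork

variable {n : ℕ}

lemma raised_le_of_row_imp (N : InvestmentNetwork n) {I J : Finset (Fin n × Fin n)} {k : Fin n}
    (h : ∀ i, (k, i) ∈ I → (k, i) ∈ J) : N.raised I k ≤ N.raised J k := by
  refine Finset.sum_le_sum fun i _ => ?_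
  by_cases hi : (k, i) ∈ I
  · rw [if_pos hi, if_pos (h i hi)]
  · rw [if_neg hi]
    split_ifs
    · exact N.x_nonneg k i
    · exact le_refl 0

lemma raised_eq_of_row_iff (N : InvestmentNetwork n) {I J : Finset (Fin n × Fin n)} {k : Fin n}
    (h : ∀ i, (k, i) ∈ I ↔ (k, i) ∈ J) : N.raised I k = N.raised J k :=
  le_antisymm (N.raised_le_of_row_imp fun i => (h i).1) (N.raised_le_of_row_imp fun i => (h i).2)

lemma raised_eq_X_of_row_full (N : InvestmentNetwork n) {C : Finset (Fin n × Fin n)} {i : Fin n}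
    (h : ∀ j, (i, j) ∈ N.edges → (i, j) ∈ C) : N.raised C i = ∑ j, N.x i j := by
  refine Finset.sum_congr rfl fun j _ => ?_
  by_cases hj : (i, j) ∈ C
  · rw [if_pos hj]
  · rw [if_neg hj]
    have : ¬ (0 < N.x i j) := fun hp => hj (h j ((N.mem_edges).2 hp))
    linarith [N.x_nonneg i j]

lemma star_x_self (N : InvestmentNetwork n) (k i : Fin n) :
    (N.starSub k).x k i = N.x k i := by
  show (if k = k then N.x k i else 0) = N.x k i
  rw [if_pos rfl]

lemma star_edgeU_insert_val (N : InvestmentNetwork n) (hacyc : N.Acyclic) (k : Fin n)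
    (c : Fin n → Fin n → ℝ) {S : Finset (Fin n × Fin n)} (hS : S ⊆ (N.starSub k).edges)
    {i : Fin n} (hi : (k, i) ∈ (N.starSub k).edges) :
    (N.starSub k).edgeUtility (rowMatrix k c) (insert (k, i) S) k i
      = N.val c k i (N.raised (insert (k, i) S) k) := by
  have hsub : insert (k, i) S ⊆ (N.starSub k).edges := Finset.insert_subset hi hS
  have hIS := N.star_investSet hacyc k hsub
  have hmem : (k, i) ∈ (N.starSub k).investSet (insert (k, i) S) := by
    rw [hIS]
    exact Finset.mem_insert_self _ _
  rw [(N.starSub k).edgeUtility_eq_val _ (Finset.mem_insert_self _ _) hmem, hIS,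
    N.star_raised k, N.star_val k]

/-- If `c` is viable for the whole (acyclic, profitable) network, then its row at an
enterprise `k` is viable for the star sub-problem at `k`. -/
lemma row_viable (N : InvestmentNetwork n) (hprof : N.Profitable) (hacyc : N.Acyclic)
    {c₂ : Fin n → Fin n → ℝ} (hv : N.Viable c₂) (k : Fin n) :
    (N.starSub k).Viable (rowMatrix k c₂) := by
  have hc₂ : N.IsCollateral c₂ := hv.1
  have hirrN := N.irr_of_acyclic hacyc
  refine ⟨N.rowMatrix_collateral k hc₂,
    (N.starSub k).nash_edges (N.star_profitable hprof k) (N.rowMatrix_collateral k hc₂)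
      (N.star_irr hacyc k), ?_⟩
  intro S hnashS
  by_contra hne
  have hSsub : S ⊆ (N.starSub k).edges := hnashS.1
  set T := (N.edges \ (N.starSub k).edges) ∪ S with hT
  have hTsub : T ⊆ N.edges :=
    Finset.union_subset (Finset.sdiff_subset) (hSsub.trans (N.star_edges_subset k))
  have hHT : ∀ e ∈ N.edges, e ∉ T → N.edgeUtility c₂ (insert e T) e.1 e.2 < N.x e.1 e.2 := by
    intro e heE heT
    have heStar : e ∈ (N.starSub k).edges := by
      by_contra h
      exact heT (Finset.mem_union_left _ (Finset.mem_sdiff.2 ⟨heE, h⟩))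
    have heS : e ∉ S := fun h => heT (Finset.mem_union_right _ h)
    obtain ⟨k', i⟩ := e
    have he1 : k' = k := (N.mem_star_edges heStar).2
    subst he1
    have hxpos : 0 < N.x k' i := (N.mem_edges).1 heE
    by_cases hinv : (k', i) ∈ N.investSet (insert (k', i) T)
    · rw [N.edgeUtility_eq_val c₂ (Finset.mem_insert_self _ _) hinv]
      have hb : N.raised (N.investSet (insert (k', i) T)) k'
          ≤ N.raised (insert (k', i) S) k' := by
        refine N.raised_le_of_row_imp ?_
        intro i' hm
        have hm' : (k', i') ∈ insert (k', i) T := N.investSet_subset _ hm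
        rcases Finset.mem_insert.1 hm' with h' | h'
        · have : i' = i := congrArg Prod.snd h'
          rw [this]
          exact Finset.mem_insert_self _ _
        · rcases Finset.mem_union.1 h' with h'' | h''
          · exfalso
            have hstar : (k', i') ∈ (N.starSub k').edges := by
              rw [N.star_edges k']
              exact Finset.mem_filter.2 ⟨(Finset.mem_sdiff.1 h'').1, rfl⟩
            exact (Finset.mem_sdiff.1 h'').2 hstar
          · exact Finset.mem_insert_of_mem h''
      calc N.val c₂ k' i (N.raised (N.investSet (insert (k', i) T)) k')
          ≤ N.val c₂ k' i (N.raised (insert (k', i) S) k') :=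
            N.val_mono (hc₂ k' i).1 (N.raised_nonneg _ _) hb
        _ = (N.starSub k').edgeUtility (rowMatrix k' c₂) (insert (k', i) S) k' i :=
            (N.star_edgeU_insert_val hacyc k' c₂ hSsub heStar).symm
        _ < (N.starSub k').x k' i := N.star_nash_add_bound k' hnashS heStar heS
        _ = N.x k' i := N.star_x_self k' i
    · rw [N.edgeUtility_of_default c₂ (Finset.mem_insert_self _ _) hinv]
      exact hxpos
  have hkill : T = N.edges := N.kill hv hirrN hTsub hHT
  refine hne (subset_antisymm hSsub ?_)
  intro e he
  have heE : e ∈ N.edges := N.star_edges_subset k he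
  rw [← hkill] at heE
  rcases Finset.mem_union.1 heE with h | h
  · exact absurd he (Finset.mem_sdiff.1 h).2
  · exact h

/-- Uniqueness of the all-cooperate Nash equilibrium for the combined collateral matrix. -/
lemma combined_unique (N : InvestmentNetwork n) (hprof : N.Profitable) (hacyc : N.Acyclic)
    {c : Fin n → Fin n → ℝ} (hcol : N.IsCollateral c)
    (hrowv : ∀ k : Fin n, N.IsEnterprise k → (N.starSub k).Viable (rowMatrix k c)) :
    ∀ C, N.NashEq c C → C = N.edges := by
  intro C hnash
  have hirrN := N.irr_of_acyclic hacyc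
  have hprofC : N.IsProfile C := hnash.1
  have hinvC : N.investSet C = C := N.nash_investSet_eq hirrN hnash
  by_contra hne
  set M := Finset.univ.filter (fun k : Fin n => ∃ i, (k, i) ∈ N.edges ∧ (k, i) ∉ C) with hM
  have hMne : M.Nonempty := by
    obtain ⟨e, heE, heC⟩ := Finset.exists_of_ssubset (ssubset_of_subset_of_ne hprofC hne)
    exact ⟨e.1, Finset.mem_filter.2 ⟨Finset.mem_univ _, e.2, heE, heC⟩⟩
  -- a bad row minimal in the investment order
  have hwf : WellFounded (fun a b : Fin n =>
      Relation.TransGen (fun a b => 0 < N.x a b) b a) := by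
    have h1 : IsTrans (Fin n) (fun a b : Fin n =>
        Relation.TransGen (fun a b => 0 < N.x a b) b a) :=
      ⟨fun a b c hab hbc => Relation.TransGen.trans hbc hab⟩
    have h2 : IsIrrefl (Fin n) (fun a b : Fin n =>
        Relation.TransGen (fun a b => 0 < N.x a b) b a) :=
      ⟨fun a ha => hacyc a ha⟩
    exact Finite.wellFounded_of_trans_of_irrefl _
  obtain ⟨k, hkM, hkmin⟩ := hwf.has_min M hMne
  have hinvfull : ∀ i, 0 < N.x k i → ∀ j, (i, j) ∈ N.edges → (i, j) ∈ C := by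
    intro i hki j hij
    by_contra h
    exact hkmin i (Finset.mem_filter.2 ⟨Finset.mem_univ _, j, hij, h⟩)
      (Relation.TransGen.single hki)
  obtain ⟨i₀, hi₀E, hi₀C⟩ := (Finset.mem_filter.1 hkM).2
  have hkent : N.IsEnterprise k := ⟨i₀, (N.mem_edges).1 hi₀E⟩
  set Tk := C.filter (fun e => e.1 = k) with hTk
  have hTkS : Tk ⊆ (N.starSub k).edges := by
    rw [N.star_edges k]
    exact Finset.filter_subset_filter _ hprofC
  have haddb : ∀ e ∈ (N.starSub k).edges, e ∉ Tk →
      (N.starSub k).edgeUtility (rowMatrix k c) (insert e Tk) e.1 e.2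
        < (N.starSub k).x e.1 e.2 := by
    intro e heS heTk
    obtain ⟨heE, he1⟩ := N.mem_star_edges heS
    obtain ⟨k', i⟩ := e
    dsimp only at he1 heE heTk ⊢
    subst he1
    have heC : (k', i) ∉ C := fun h => heTk (Finset.mem_filter.2 ⟨h, rfl⟩)
    have hxpos : 0 < N.x k' i := (N.mem_edges).1 heE
    have hik : i ≠ k' := (hirrN _ heE).symm
    -- the new investor is solvent
    have hrowi : N.raised (N.investSet C) i = ∑ j, N.x i j := by
      rw [hinvC]
      exact N.raised_eq_X_of_row_full (hinvfull i hxpos)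
    have hconsI : N.Consistent (insert (k', i) C) (insert (k', i) (N.investSet C)) := by
      constructor
      · exact Finset.insert_subset_insert _ (N.investSet_subset C)
      · intro f hf
        rcases Finset.mem_insert.1 hf with rfl | hf'
        · rw [N.raised_insert_ne _ hik, hrowi]
          exact N.Z_le_X hprof i
        · exact le_trans (N.investSet_solvent hf')
            (N.raised_mono (Finset.subset_insert _ _) f.2)
    have hmemI : (k', i) ∈ N.investSet (insert (k', i) C) :=
      N.subset_investSet hconsI (Finset.mem_insert_self _ _)
    set C' := insert (k', i) C with hC'
    have hprofC' : N.IsProfile C' := Finset.insert_subset heE hprofC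
    have hdev : Deviation C C' i := by
      intro f hnf
      constructor
      · exact fun hm => Finset.mem_insert_of_mem hm
      · intro hm
        rcases Finset.mem_insert.1 hm with h' | h'
        · exact absurd (congrArg Prod.snd h') hnf
        · exact h'
    have hlt : N.utility c C' i < N.utility c C i := by
      rcases hnash.2 i C' hprofC' hdev with h | h
      · exact h
      · exfalso
        have := h.2
        rw [coopCount_insert heC] at this
        omega
    -- pointwise comparison
    have hpoint : ∀ k'' : Fin n,
        (if (k'', i) ∈ N.edges then N.edgeUtility c C k'' i else 0)
          ≤ (if (k'', i) ∈ N.edges then N.edgeUtility c C' k'' i else 0)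
            + (if k'' = k' then N.x k' i - N.edgeUtility c C' k' i else 0) := by
      intro k''
      by_cases hkk : k'' = k'
      · subst hkk
        rw [if_pos heE, if_pos heE, if_pos rfl, N.edgeUtility_of_defect c heC]
        ring_nf
        exact le_refl _
      · rw [if_neg hkk, add_zero]
        by_cases hedge : (k'', i) ∈ N.edges
        · rw [if_pos hedge, if_pos hedge]
          by_cases hmem : (k'', i) ∈ C
          · exact N.edgeUtility_mono hcol hmem (Finset.subset_insert _ _)
          · have hmem' : (k'', i) ∉ C' := by
              intro hm
              rcases Finset.mem_insert.1 hm with h' | h'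
              · exact hkk (congrArg Prod.fst h')
              · exact hmem h'
            rw [N.edgeUtility_of_defect c hmem, N.edgeUtility_of_defect c hmem']
        · rw [if_neg hedge, if_neg hedge]
    have hsum := Finset.sum_le_sum (fun k'' (_ : k'' ∈ Finset.univ) => hpoint k'')
    rw [Finset.sum_add_distrib, Finset.sum_ite_eq' Finset.univ k'
      (fun _ => N.x k' i - N.edgeUtility c C' k' i), if_pos (Finset.mem_univ _)] at hsum
    have hxlt : N.edgeUtility c C' k' i < N.x k' i := by
      have h1 : N.utility c C i ≤ N.utility c C' i
          + (N.x k' i - N.edgeUtility c C' k' i) := hsum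
      linarith
    -- transfer to the star game
    have hre : N.raised (N.investSet C') k' = N.raised (insert (k', i) Tk) k' := by
      refine N.raised_eq_of_row_iff fun i' => ?_
      constructor
      · intro hm
        have hm' : (k', i') ∈ C' := N.investSet_subset _ hm
        rcases Finset.mem_insert.1 hm' with h' | h'
        · have : i' = i := congrArg Prod.snd h'
          rw [this]
          exact Finset.mem_insert_self _ _
        · exact Finset.mem_insert_of_mem (Finset.mem_filter.2 ⟨h', rfl⟩)
      · intro hm
        rcases Finset.mem_insert.1 hm with h' | h'
        · have : i' = i := congrArg Prod.snd h'
          rw [this]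
          exact hmemI
        · have : (k', i') ∈ C := (Finset.mem_filter.1 h').1
          rw [← hinvC] at this
          exact N.investSet_mono (Finset.subset_insert _ _) this
    have heq : N.edgeUtility c C' k' i
        = (N.starSub k').edgeUtility (rowMatrix k' c) (insert (k', i) Tk) k' i := by
      rw [N.edgeUtility_eq_val c (Finset.mem_insert_self _ _) hmemI, hre,
        N.star_edgeU_insert_val hacyc k' c hTkS heS]
    rw [← heq, N.star_x_self k' i]
    exact hxlt
  have hkill : Tk = (N.starSub k).edges :=
    (N.starSub k).kill (hrowv k hkent) (N.star_irr hacyc k) hTkS haddb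
  have : (k, i₀) ∈ (N.starSub k).edges := by
    rw [N.star_edges k]
    exact Finset.mem_filter.2 ⟨hi₀E, rfl⟩
  rw [← hkill] at this
  exact hi₀C (Finset.mem_filter.1 this).1

end InvestmentNetwork

namespace InvestmentNetwork

variable {n : ℕ}

lemma total_rowMatrix (k : Fin n) (c₂ : Fin n → Fin n → ℝ) :
    total (rowMatrix k c₂) = ∑ i, c₂ k i := by
  unfold total rowMatrix
  have h1 : ∀ j : Fin n, (∑ i, if j = k then c₂ j i else 0)
      = if j = k then ∑ i, c₂ k i else 0 := by
    intro j
    by_cases h : j = k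
    · subst h
      simp
    · simp [h]
  rw [Finset.sum_congr rfl fun j _ => h1 j,
    Finset.sum_ite_eq' Finset.univ k (fun _ => ∑ i, c₂ k i), if_pos (Finset.mem_univ _)]

lemma total_eq_sum_rows (N : InvestmentNetwork n) {c : Fin n → Fin n → ℝ}
    (hcol : N.IsCollateral c) :
    total c = ∑ k ∈ Finset.univ.filter (fun k => N.IsEnterprise k), total (rowMatrix k c) := by
  have h1 : ∀ k ∈ Finset.univ.filter (fun k => N.IsEnterprise k),
      total (rowMatrix k c) = ∑ i, c k i := fun k _ => total_rowMatrix k c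
  rw [Finset.sum_congr rfl h1]
  unfold total
  refine (Finset.sum_subset (Finset.filter_subset _ _) ?_).symm
  intro k _ hk
  have hent : ¬ N.IsEnterprise k := by
    intro h
    exact hk (Finset.mem_filter.2 ⟨Finset.mem_univ _, h⟩)
  have hz : ∀ i, N.x k i = 0 := by
    intro i
    by_contra h
    exact hent ⟨i, lt_of_le_of_ne (N.x_nonneg k i) (Ne.symm h)⟩
  refine Finset.sum_eq_zero fun i _ => (hcol k i).2 (hz i)

lemma sum_rows_le_total (N : InvestmentNetwork n) {c₂ : Fin n → Fin n → ℝ}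
    (hcol : N.IsCollateral c₂) :
    (∑ k ∈ Finset.univ.filter (fun k => N.IsEnterprise k), total (rowMatrix k c₂))
      ≤ total c₂ := by
  have h1 : ∀ k ∈ Finset.univ.filter (fun k => N.IsEnterprise k),
      total (rowMatrix k c₂) = ∑ i, c₂ k i := fun k _ => total_rowMatrix k c₂
  rw [Finset.sum_congr rfl h1]
  unfold total
  refine Finset.sum_le_sum_of_subset_of_nonneg (Finset.filter_subset _ _) ?_
  intro k _ _
  exact Finset.sum_nonneg fun i _ => (hcol k i).1

end InvestmentNetwork

/-- **Optimal collaterals in DAGs (Theorem 9).**  If the investment graph is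
acyclic and the collateral matrix `c` restricts, on the star of every
enterprise vertex `k`, to an optimal solution of the single-enterprise
collateral minimization problem induced on that star, then `c` is an optimal
solution of the collateral minimization problem of the whole network (in
particular it is viable), and its total collateral is the sum of the optimal
totals over the star decomposition — i.e. `C_G = ∑_{H_i ∈ ℋ(G)} C_{H_i}` and
`NEC(P_G) = 1`. -/

theorem dag_optimal_collaterals {n : ℕ} (N : InvestmentNetwork n)
    (hprof : N.Profitable) (hacyc : N.Acyclic)
    (c : Fin n → Fin n → ℝ) (hcol : N.IsCollateral c)
    (hrow : ∀ k : Fin n, N.IsEnterprise k →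
      (N.starSub k).Optimal (InvestmentNetwork.rowMatrix k c)) :
    N.Optimal c ∧
      InvestmentNetwork.total c =
        ∑ k ∈ Finset.univ.filter (fun k => N.IsEnterprise k),
          InvestmentNetwork.total (InvestmentNetwork.rowMatrix k c) := by
  have hirrN := N.irr_of_acyclic hacyc
  have hviable : N.Viable c :=
    ⟨hcol, N.nash_edges hprof hcol hirrN,
      N.combined_unique hprof hacyc hcol (fun k hk => (hrow k hk).1)⟩
  refine ⟨⟨hviable, ?_⟩, N.total_eq_sum_rows hcol⟩
  intro c₂ hv₂
  calc InvestmentNetwork.total c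
      = ∑ k ∈ Finset.univ.filter (fun k => N.IsEnterprise k),
          InvestmentNetwork.total (InvestmentNetwork.rowMatrix k c) :=
        N.total_eq_sum_rows hcol
    _ ≤ ∑ k ∈ Finset.univ.filter (fun k => N.IsEnterprise k),
          InvestmentNetwork.total (InvestmentNetwork.rowMatrix k c₂) := by
        refine Finset.sum_le_sum fun k hk => ?_
        have hkent : N.IsEnterprise k := (Finset.mem_filter.1 hk).2
        exact (hrow k hkent).2 _ (N.row_viable hprof hacyc hv₂ k)
    _ ≤ InvestmentNetwork.total c₂ := N.sum_rows_le_total hv₂.1
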